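/- If α and β are complex roots of P₃(T) = T⁸ − T⁷ + 2T⁶ − 4T⁵ − 2T⁴ − 12T³ + 18T² − 27T + 81 and α/β is a root of unity (i.e., (α/β)^n = 1 for some positive integer n), then α = β. (Equivalently, the tensor square of the L-polynomial has no nontrivial cyclotomic factors; this certifies that the corresponding ordinary simple abelian fourfold is geometrically simple.) -/

import Mathlib

set_option exponentiation.threshold 5000
set_option maxRecDepth 10000
set_option maxHeartbeats 1600000
set_option synthInstance.maxHeartbeats 400000

open Polynomial

/-- cast of a natural mod ℓ -/
lemma natCast_mod_eq {F : Type} [CommRing F] {ℓ : ℕ} (hF : ((ℓ : ℕ) : F) = 0) (a : ℕ) :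
    ((a : ℕ) : F) = ((a % ℓ : ℕ) : F) := by
  conv_lhs => rw [← Nat.div_add_mod a ℓ]
  push_cast
  rw [hF]
  ring

lemma cast_pow_eq_one {F : Type} [CommRing F] {ℓ : ℕ} (hF : ((ℓ : ℕ) : F) = 0)
    (c e : ℕ) (h : c ^ e % ℓ = 1) : ((c : ℕ) : F) ^ e = 1 := by
  rw [← Nat.cast_pow, natCast_mod_eq hF, h]
  norm_num

/-- Any root of P₃ in a field of characteristic 883 satisfies x^882 = 1. -/
lemma split883 (F : Type) [Field F] (hF : ((883 : ℕ) : F) = 0) (x : F)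
    (hx : x ^ 8 - x ^ 7 + 2 * x ^ 6 - 4 * x ^ 5 - 2 * x ^ 4 - 12 * x ^ 3 + 18 * x ^ 2
      - 27 * x + 81 = 0) : x ^ 882 = 1 := by
  have hF' : (883 : F) = 0 := by exact_mod_cast hF
  have hroot : (x - 67) * (x - 354) * (x - 536) * (x - 579) * (x - 659) * (x - 666) *
      (x - 700) * (x - 855) = 0 := by
    linear_combination hx - (5*x^7 - 9428*x^6 + 9858188*x^5 - 6203658909*x^4
      + 2374697147628*x^3 - 527359147994070*x^2 + 59034590025520311*x
      - 2189699469110052693) * hF'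
  have key : ∀ c : ℕ, x = (c : F) → c ^ 882 % 883 = 1 → x ^ 882 = 1 := by
    intro c hc h
    rw [hc]
    exact cast_pow_eq_one hF c 882 h
  rcases mul_eq_zero.mp hroot with h8 | h
  rcases mul_eq_zero.mp h8 with h8 | h
  rcases mul_eq_zero.mp h8 with h8 | h
  rcases mul_eq_zero.mp h8 with h8 | h
  rcases mul_eq_zero.mp h8 with h8 | h
  rcases mul_eq_zero.mp h8 with h8 | h
  rcases mul_eq_zero.mp h8 with h8 | h
  · exact key 67 (by push_cast; linear_combination h8) (by decide)
  · exact key 354 (by push_cast; linear_combination h) (by decide)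
  · exact key 536 (by push_cast; linear_combination h) (by decide)
  · exact key 579 (by push_cast; linear_combination h) (by decide)
  · exact key 659 (by push_cast; linear_combination h) (by decide)
  · exact key 666 (by push_cast; linear_combination h) (by decide)
  · exact key 700 (by push_cast; linear_combination h) (by decide)
  · exact key 855 (by push_cast; linear_combination h) (by decide)

/-- Any root of P₃ in a field of characteristic 2459 satisfies x^2458 = 1. -/
lemma split2459 (F : Type) [Field F] (hF : ((2459 : ℕ) : F) = 0) (x : F)
    (hx : x ^ 8 - x ^ 7 + 2 * x ^ 6 - 4 * x ^ 5 - 2 * x ^ 4 - 12 * x ^ 3 + 18 * x ^ 2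
      - 27 * x + 81 = 0) : x ^ 2458 = 1 := by
  have hF' : (2459 : F) = 0 := by exact_mod_cast hF
  have hroot : (x - 698) * (x - 809) * (x - 845) * (x - 969) * (x - 1152) * (x - 1561) *
      (x - 1580) * (x - 2223) = 0 := by
    linear_combination hx - (4*x^7 - 16830*x^6 + 39591194*x^5 - 57012966529*x^4
      + 51513048222119*x^3 - 28545585099775320*x^2 + 8878187013227427447*x
      - 1187620904113318902141) * hF'
  have key : ∀ c : ℕ, x = (c : F) → c ^ 2458 % 2459 = 1 → x ^ 2458 = 1 := by
    intro c hc h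
    rw [hc]
    exact cast_pow_eq_one hF c 2458 h
  rcases mul_eq_zero.mp hroot with h8 | h
  rcases mul_eq_zero.mp h8 with h8 | h
  rcases mul_eq_zero.mp h8 with h8 | h
  rcases mul_eq_zero.mp h8 with h8 | h
  rcases mul_eq_zero.mp h8 with h8 | h
  rcases mul_eq_zero.mp h8 with h8 | h
  rcases mul_eq_zero.mp h8 with h8 | h
  · exact key 698 (by push_cast; linear_combination h8) (by decide)
  · exact key 809 (by push_cast; linear_combination h) (by decide)
  · exact key 845 (by push_cast; linear_combination h) (by decide)
  · exact key 969 (by push_cast; linear_combination h) (by decide)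
  · exact key 1152 (by push_cast; linear_combination h) (by decide)
  · exact key 1561 (by push_cast; linear_combination h) (by decide)
  · exact key 1580 (by push_cast; linear_combination h) (by decide)
  · exact key 2223 (by push_cast; linear_combination h) (by decide)

lemma int_of_rootP3 {x : ℂ} (hx : x ^ 8 - x ^ 7 + 2 * x ^ 6 - 4 * x ^ 5 - 2 * x ^ 4
    - 12 * x ^ 3 + 18 * x ^ 2 - 27 * x + 81 = 0) : IsIntegral ℤ x := by
  refine ⟨X ^ 8 + (C (-1) * X ^ 7 + C 2 * X ^ 6 + C (-4) * X ^ 5 + C (-2) * X ^ 4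
    + C (-12) * X ^ 3 + C 18 * X ^ 2 + C (-27) * X + C 81), ?_, ?_⟩
  · apply Polynomial.monic_X_pow_add
    apply lt_of_le_of_lt (b := (7 : WithBot ℕ))
    · compute_degree
    · norm_num
  · rw [← aeval_def]
    simp only [map_add, map_mul, map_pow, map_neg, map_ofNat, map_one, aeval_X, aeval_C, algebraMap_int_eq, eq_intCast]
    push_cast
    linear_combination hx

lemma int_of_finOrder {x : ℂ} (h : IsOfFinOrder x) : IsIntegral ℤ x := by
  refine ⟨X ^ (orderOf x) - C 1, monic_X_pow_sub_C 1 h.orderOf_pos.ne', ?_⟩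
  rw [← aeval_def]
  simp only [map_sub, map_pow, map_one, aeval_X, aeval_C, algebraMap_int_eq, eq_intCast]
  push_cast
  rw [pow_orderOf_eq_one]
  ring

section Abstract

variable {R : Type} [CommRing R] {F : Type} [Field F]

/-- Abstract residue-field step: the image of ζ satisfies z^D = 1. -/
lemma abs1 (π : R →+* F) (ℓ D : ℕ) (hFℓ : ((ℓ : ℕ) : F) = 0)
    (a' b' z' : R)
    (hPa : a' ^ 8 - a' ^ 7 + 2 * a' ^ 6 - 4 * a' ^ 5 - 2 * a' ^ 4 - 12 * a' ^ 3
      + 18 * a' ^ 2 - 27 * a' + 81 = 0)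
    (hPb : b' ^ 8 - b' ^ 7 + 2 * b' ^ 6 - 4 * b' ^ 5 - 2 * b' ^ 4 - 12 * b' ^ 3
      + 18 * b' ^ 2 - 27 * b' + 81 = 0)
    (hab : a' = z' * b')
    (hsplit : ∀ x : F,
      x ^ 8 - x ^ 7 + 2 * x ^ 6 - 4 * x ^ 5 - 2 * x ^ 4 - 12 * x ^ 3 + 18 * x ^ 2
        - 27 * x + 81 = 0 → x ^ D = 1) :
    (π z') ^ D = 1 := by
  have hPaF : (π a') ^ 8 - (π a') ^ 7 + 2 * (π a') ^ 6 - 4 * (π a') ^ 5 - 2 * (π a') ^ 4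
      - 12 * (π a') ^ 3 + 18 * (π a') ^ 2 - 27 * (π a') + 81 = 0 := by
    have := congrArg π hPa
    simpa [map_add, map_sub, map_mul, map_pow, map_ofNat] using this
  have hPbF : (π b') ^ 8 - (π b') ^ 7 + 2 * (π b') ^ 6 - 4 * (π b') ^ 5 - 2 * (π b') ^ 4
      - 12 * (π b') ^ 3 + 18 * (π b') ^ 2 - 27 * (π b') + 81 = 0 := by
    have := congrArg π hPb
    simpa [map_add, map_sub, map_mul, map_pow, map_ofNat] using this
  have habF : π a' = π z' * π b' := by rw [hab, map_mul]
  have haD : (π a') ^ D = 1 := hsplit _ hPaF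
  have hbD : (π b') ^ D = 1 := hsplit _ hPbF
  calc (π z') ^ D = (π z') ^ D * (π b') ^ D := by rw [hbD, mul_one]
  _ = (π a') ^ D := by rw [← mul_pow, ← habF]
  _ = 1 := haD

/-- Abstract residue-field step: if a geometric sum of length q vanishes in R and the
image of the common ratio is 1, then q = ℓ. -/
lemma abs2 (π : R →+* F) (ℓ q N : ℕ) (hℓ : Nat.Prime ℓ) (hq : Nat.Prime q)
    (hFℓ : ((ℓ : ℕ) : F) = 0) (z' : R) (hzN : (π z') ^ N = 1)
    (hsum : (∑ i ∈ Finset.range q, (z' ^ N) ^ i) = 0) : q = ℓ := by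
  have hsumF := congrArg π hsum
  rw [map_sum, map_zero] at hsumF
  simp only [map_pow] at hsumF
  rw [hzN] at hsumF
  simp only [one_pow, Finset.sum_const, Finset.card_range, nsmul_eq_mul, mul_one] at hsumF
  -- hsumF : (q : F) = 0
  have hdq : ringChar F ∣ q := ringChar.dvd hsumF
  have hdl : ringChar F ∣ ℓ := ringChar.dvd hFℓ
  have hne1 : ringChar F ≠ 1 := by
    intro h1
    have : ((1 : ℕ) : F) = 0 := ringChar.spec F 1 |>.2 (h1 ▸ dvd_refl _)
    simp at this
  have hcl : ringChar F = ℓ := (hℓ.eq_one_or_self_of_dvd _ hdl).resolve_left hne1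
  rw [hcl] at hdq
  exact ((Nat.prime_dvd_prime_iff_eq hℓ hq).1 hdq).symm

end Abstract

/-- Key reduction lemma: if α = ζβ with α, β, ζ algebraic integers, ζ of finite order,
α and β roots of P₃, and every root of P₃ in every field of characteristic ℓ satisfies
x^D = 1, then orderOf ζ divides D·ℓ^c for some c. -/
lemma key {α β ζ : ℂ} (hia : IsIntegral ℤ α) (hib : IsIntegral ℤ β) (hiz : IsIntegral ℤ ζ)
    (hab : α = ζ * β) (hfin : IsOfFinOrder ζ)
    (hPa : α ^ 8 - α ^ 7 + 2 * α ^ 6 - 4 * α ^ 5 - 2 * α ^ 4 - 12 * α ^ 3 + 18 * α ^ 2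
      - 27 * α + 81 = 0)
    (hPb : β ^ 8 - β ^ 7 + 2 * β ^ 6 - 4 * β ^ 5 - 2 * β ^ 4 - 12 * β ^ 3 + 18 * β ^ 2
      - 27 * β + 81 = 0)
    (ℓ D : ℕ) (hℓ : Nat.Prime ℓ) (hD : D ≠ 0)
    (hsplit : ∀ (F : Type) [Field F], ((ℓ : ℕ) : F) = 0 → ∀ x : F,
      x ^ 8 - x ^ 7 + 2 * x ^ 6 - 4 * x ^ 5 - 2 * x ^ 4 - 12 * x ^ 3 + 18 * x ^ 2
        - 27 * x + 81 = 0 → x ^ D = 1) :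
    ∃ c : ℕ, orderOf ζ ∣ D * ℓ ^ c := by
  have val_inj : Function.Injective ((integralClosure ℤ ℂ).val) := Subtype.val_injective
  set a' : integralClosure ℤ ℂ := ⟨α, (mem_integralClosure_iff ℤ ℂ).2 hia⟩ with ha'
  set b' : integralClosure ℤ ℂ := ⟨β, (mem_integralClosure_iff ℤ ℂ).2 hib⟩ with hb'
  set z' : integralClosure ℤ ℂ := ⟨ζ, (mem_integralClosure_iff ℤ ℂ).2 hiz⟩ with hz'
  -- ℓ is not a unit in A
  have hunit : ¬ IsUnit ((ℓ : ℕ) : integralClosure ℤ ℂ) := by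
    intro hu
    obtain ⟨u, hu⟩ := hu
    have h1 : ((ℓ : ℕ) : integralClosure ℤ ℂ) * ((u⁻¹ : (integralClosure ℤ ℂ)ˣ) : integralClosure ℤ ℂ) = 1 := by
      rw [← hu]; exact u.mul_inv
    set x : ℂ := (integralClosure ℤ ℂ).val ((u⁻¹ : (integralClosure ℤ ℂ)ˣ) : integralClosure ℤ ℂ) with hx
    have hxint : IsIntegral ℤ x := ((u⁻¹ : (integralClosure ℤ ℂ)ˣ) : integralClosure ℤ ℂ).2
    have hℓx : (ℓ : ℂ) * x = 1 := by
      have h2 := congrArg (integralClosure ℤ ℂ).val h1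
      rw [map_mul, map_natCast, map_one] at h2
      exact h2
    have hℓ0 : ((ℓ : ℚ) : ℂ) ≠ 0 := by
      have := hℓ.pos
      push_cast
      exact_mod_cast Nat.cast_ne_zero.2 this.ne'
    have hxval : x = algebraMap ℚ ℂ (1 / ℓ) := by
      rw [map_div₀, map_one, map_natCast]
      exact eq_one_div_of_mul_eq_one_left (by linear_combination hℓx)
    rw [hxval] at hxint
    have h2 : IsIntegral ℤ ((1 : ℚ) / ℓ) :=
      (isIntegral_algebraMap_iff (algebraMap ℚ ℂ).injective).1 hxint
    obtain ⟨z, hz⟩ := IsIntegrallyClosed.isIntegral_iff.1 h2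
    have hzq : (z : ℚ) * ℓ = 1 := by
      rw [show ((z : ℤ) : ℚ) = algebraMap ℤ ℚ z from rfl, hz]
      have : (ℓ : ℚ) ≠ 0 := by exact_mod_cast hℓ.pos.ne'
      field_simp
    have hzz : z * (ℓ : ℤ) = 1 := by exact_mod_cast hzq
    have hdvd1 : (ℓ : ℤ) ∣ 1 := ⟨z, by linarith⟩
    have := Int.le_of_dvd one_pos hdvd1
    have := hℓ.two_le
    omega
  -- maximal ideal above ℓ
  obtain ⟨M, hM, hle⟩ := Ideal.exists_le_maximal (Ideal.span {((ℓ : ℕ) : integralClosure ℤ ℂ)})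
    (fun h => hunit (Ideal.span_singleton_eq_top.1 h))
  haveI := hM
  letI fieldQ : Field (integralClosure ℤ ℂ ⧸ M) := Ideal.Quotient.field M
  have hFℓ : ((ℓ : ℕ) : integralClosure ℤ ℂ ⧸ M) = 0 := by
    rw [show ((ℓ : ℕ) : integralClosure ℤ ℂ ⧸ M)
        = Ideal.Quotient.mk M ((ℓ : ℕ) : integralClosure ℤ ℂ)
      from (map_natCast (Ideal.Quotient.mk M) ℓ).symm]
    exact Ideal.Quotient.eq_zero_iff_mem.2 (hle (Ideal.subset_span (Set.mem_singleton _)))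
  -- equations in A
  have hPaA : a' ^ 8 - a' ^ 7 + 2 * a' ^ 6 - 4 * a' ^ 5 - 2 * a' ^ 4 - 12 * a' ^ 3
      + 18 * a' ^ 2 - 27 * a' + 81 = 0 := by
    apply val_inj
    push_cast
    convert hPa using 2 <;> norm_num
    rfl
  have hPbA : b' ^ 8 - b' ^ 7 + 2 * b' ^ 6 - 4 * b' ^ 5 - 2 * b' ^ 4 - 12 * b' ^ 3
      + 18 * b' ^ 2 - 27 * b' + 81 = 0 := by
    apply val_inj
    push_cast
    convert hPb using 2 <;> norm_num
    rfl
  have habA : a' = z' * b' := by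
    apply val_inj
    push_cast
    exact hab
  have hzD : ((Ideal.Quotient.mk M) z') ^ D = 1 :=
    abs1 (Ideal.Quotient.mk M) ℓ D hFℓ a' b' z' hPaA hPbA habA (fun x hx => hsplit _ hFℓ x hx)
  -- order of ζ ^ D is a power of ℓ
  set t := orderOf (ζ ^ D) with ht
  have hfinD : IsOfFinOrder (ζ ^ D) := hfin.pow
  have ht0 : t ≠ 0 := hfinD.orderOf_pos.ne'
  have hq : ∀ {q : ℕ}, Nat.Prime q → q ∣ t → q = ℓ := by
    intro q hqp hqt
    set θ : ℂ := ζ ^ (D * (t / q)) with hθ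
    have hθeq : θ = (ζ ^ D) ^ (t / q) := by rw [hθ, pow_mul]
    have hθpow : θ ^ q = 1 := by
      rw [hθeq, ← pow_mul, Nat.div_mul_cancel hqt, pow_orderOf_eq_one]
    have htq0 : t / q ≠ 0 := by
      have h1 := Nat.le_of_dvd (Nat.pos_of_ne_zero ht0) hqt
      have h2 := Nat.div_pos h1 hqp.pos
      omega
    have hθne : θ ≠ 1 := by
      intro hcon
      rw [hθeq] at hcon
      have hdvd := orderOf_dvd_iff_pow_eq_one.2 hcon
      have h1 := Nat.le_of_dvd (Nat.pos_of_ne_zero htq0) hdvd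
      have h2 : t / q < t := Nat.div_lt_self (Nat.pos_of_ne_zero ht0) hqp.one_lt
      omega
    have hsum : (∑ i ∈ Finset.range q, θ ^ i) = 0 := by
      have hg := geom_sum_mul θ q
      rw [hθpow, sub_self] at hg
      rcases mul_eq_zero.mp hg with hcase | hcase
      · exact hcase
      · exact absurd (by linear_combination hcase) hθne
    have hsumA : (∑ i ∈ Finset.range q, (z' ^ (D * (t / q))) ^ i) = 0 := by
      apply val_inj
      rw [map_sum, map_zero]
      simp only [map_pow]
      exact hsum
    have hzN : ((Ideal.Quotient.mk M) z') ^ (D * (t / q)) = 1 := by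
      rw [pow_mul, hzD, one_pow]
    exact abs2 (Ideal.Quotient.mk M) ℓ q (D * (t / q)) hℓ hqp hFℓ z' hzN hsumA
  have htpow : t = ℓ ^ t.primeFactorsList.length :=
    Nat.eq_prime_pow_of_unique_prime_dvd ht0 (fun hd1 hd2 => hq hd1 hd2)
  refine ⟨t.primeFactorsList.length, ?_⟩
  have hordpow : t = orderOf ζ / Nat.gcd (orderOf ζ) D := orderOf_pow' ζ hD
  have hgd : Nat.gcd (orderOf ζ) D ∣ orderOf ζ := Nat.gcd_dvd_left _ _
  have hord : orderOf ζ = Nat.gcd (orderOf ζ) D * t := by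
    rw [hordpow, Nat.mul_div_cancel' hgd]
  rw [hord, ← htpow]
  exact Nat.mul_dvd_mul (Nat.gcd_dvd_right _ _) dvd_rfl

/-- The Weil polynomial of the Jacobian of `y² = x⁹ + x⁸ + x⁷ + 2x⁵ + x` over `𝔽₃`. -/
noncomputable def P3 : Polynomial ℂ :=
  X ^ 8 - X ^ 7 + 2 * X ^ 6 - 4 * X ^ 5 - 2 * X ^ 4 - 12 * X ^ 3 + 18 * X ^ 2 - 27 * X + 81

/-- If `α` and `β` are complex roots of `P₃` whose ratio is a root of unity, then `α = β`. -/
theorem P3_no_root_of_unity_ratio (α β : ℂ) (hα : P3.eval α = 0) (hβ : P3.eval β = 0)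
    (h : ∃ n : ℕ, 0 < n ∧ (α / β) ^ n = 1) : α = β := by
  obtain ⟨n, hn, hpow⟩ := h
  simp only [P3, eval_add, eval_sub, eval_mul, eval_pow, eval_X, eval_ofNat] at hα hβ
  have hβ0 : β ≠ 0 := by
    intro h0
    rw [h0] at hβ
    norm_num at hβ
  have hαβ : α = (α / β) * β := by field_simp
  have hfin : IsOfFinOrder (α / β) := isOfFinOrder_iff_pow_eq_one.2 ⟨n, hn, hpow⟩
  have hPa : α ^ 8 - α ^ 7 + 2 * α ^ 6 - 4 * α ^ 5 - 2 * α ^ 4 - 12 * α ^ 3 + 18 * α ^ 2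
      - 27 * α + 81 = 0 := by linear_combination hα
  have hPb : β ^ 8 - β ^ 7 + 2 * β ^ 6 - 4 * β ^ 5 - 2 * β ^ 4 - 12 * β ^ 3 + 18 * β ^ 2
      - 27 * β + 81 = 0 := by linear_combination hβ
  have hia : IsIntegral ℤ α := int_of_rootP3 hPa
  have hib : IsIntegral ℤ β := int_of_rootP3 hPb
  have hiz : IsIntegral ℤ (α / β) := int_of_finOrder hfin
  obtain ⟨c1, hc1⟩ := key hia hib hiz hαβ hfin hPa hPb 883 882 (by norm_num) (by norm_num)
    (fun F _ hF x hx => split883 F hF x hx)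
  obtain ⟨c2, hc2⟩ := key hia hib hiz hαβ hfin hPa hPb 2459 2458 (by norm_num) (by norm_num)
    (fun F _ hF x hx => split2459 F hF x hx)
  have hm0 : orderOf (α / β) ≠ 0 := hfin.orderOf_pos.ne'
  -- every prime divisor of the order is 2
  have hq2 : ∀ {q : ℕ}, Nat.Prime q → q ∣ orderOf (α / β) → q = 2 := by
    intro q hq hqm
    have d1 : q ∣ 882 * 883 ^ c1 := hqm.trans hc1
    have d2 : q ∣ 2458 * 2459 ^ c2 := hqm.trans hc2
    rcases (Nat.Prime.dvd_mul hq).1 d1 with h1 | h1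
    · rcases (Nat.Prime.dvd_mul hq).1 d2 with h2 | h2
      · have hg : q ∣ Nat.gcd 882 2458 := Nat.dvd_gcd h1 h2
        have : Nat.gcd 882 2458 = 2 := by norm_num
        rw [this] at hg
        exact (Nat.prime_dvd_prime_iff_eq hq Nat.prime_two).1 hg
      · have h3 : q = 2459 := (Nat.prime_dvd_prime_iff_eq hq (by norm_num)).1
          (hq.dvd_of_dvd_pow h2)
        rw [h3] at h1
        have := Nat.le_of_dvd (by norm_num) h1
        omega
    · have h3 : q = 883 := (Nat.prime_dvd_prime_iff_eq hq (by norm_num)).1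
        (hq.dvd_of_dvd_pow h1)
      rcases (Nat.Prime.dvd_mul hq).1 d2 with h2 | h2
      · rw [h3] at h2
        norm_num at h2
      · have h4 : q = 2459 := (Nat.prime_dvd_prime_iff_eq hq (by norm_num)).1
          (hq.dvd_of_dvd_pow h2)
        omega
  by_cases hm1 : orderOf (α / β) = 1
  · have h1 : α / β = 1 := orderOf_eq_one_iff.1 hm1
    rw [h1, one_mul] at hαβ
    exact hαβ
  · -- the order is a power of 2, and at most 2, so it is 2 and α/β = -1
    have hk := Nat.eq_prime_pow_of_unique_prime_dvd hm0 (fun hd1 hd2 => hq2 hd1 hd2)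
    set k := (orderOf (α / β)).primeFactorsList.length with hkdef
    have hk1 : k = 1 := by
      rcases Nat.lt_or_ge k 1 with hlt | hge
      · interval_cases k
        · rw [hk] at hm1; norm_num at hm1
      rcases Nat.lt_or_ge k 2 with hlt2 | hge2
      · omega
      · exfalso
        have h4 : (4 : ℕ) ∣ 882 * 883 ^ c1 := by
          refine dvd_trans ?_ (hk ▸ hc1)
          have : (2 : ℕ) ^ 2 ∣ 2 ^ k := pow_dvd_pow 2 hge2
          simpa using this
        have heq : 882 * 883 ^ c1 = 2 * (441 * 883 ^ c1) := by ring
        rw [heq] at h4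
        have h2 : (2 : ℕ) ∣ 441 * 883 ^ c1 := by
          rcases h4 with ⟨w, hw⟩
          omega
        have hodd : Odd (441 * 883 ^ c1) := Odd.mul (by decide) (Odd.pow (by decide))
        rw [Nat.odd_iff] at hodd
        omega
    have hm2 : orderOf (α / β) = 2 := by rw [hk, hk1, pow_one]
    have hζ2 : (α / β) ^ 2 = 1 := by
      rw [← hm2]; exact pow_orderOf_eq_one _
    have hζne : α / β ≠ 1 := by
      intro h1
      rw [orderOf_eq_one_iff.2 h1] at hm2
      norm_num at hm2
    have hζn1 : α / β = -1 := by
      have hfact : (α / β - 1) * (α / β + 1) = 0 := by linear_combination hζ2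
      rcases mul_eq_zero.mp hfact with h1 | h1
      · exact absurd (by linear_combination h1) hζne
      · linear_combination h1
    exfalso
    rw [hζn1] at hαβ
    have hPnb : β ^ 8 + β ^ 7 + 2 * β ^ 6 + 4 * β ^ 5 - 2 * β ^ 4 + 12 * β ^ 3 + 18 * β ^ 2
        + 27 * β + 81 = 0 := by
      rw [hαβ] at hPa
      linear_combination hPa
    have hcontr : (367416 : ℂ) = 0 := by
      linear_combination
        (2268 + 711 * β - 267 * β ^ 2 - 299 * β ^ 3 + 121 * β ^ 4 + 191 * β ^ 5 - 35 * β ^ 6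
          - 35 * β ^ 7) * hPb +
        (2268 - 711 * β - 267 * β ^ 2 + 299 * β ^ 3 + 121 * β ^ 4 - 191 * β ^ 5 - 35 * β ^ 6
          + 35 * β ^ 7) * hPnb
    norm_num at hcontr
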